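/- For multiplicative characters A, B, B', C of F_q and x, y ∈ F_q \ {0,1}, F₁(A;B,B';C;x,y) = (BB')(-1)·F₁(A;B,B'; ABB'C̄; 1−x, 1−y). -/

import Mathlib

open Finset

variable {F : Type*} [Field F] [Fintype F] [DecidableEq F]

/-- Finite-field binomial coefficient `[A choose B] = B(-1) * J(A, B⁻¹)`. -/
noncomputable def ffBinom (A B : MulChar F ℂ) : ℂ :=
  B (-1) * jacobiSum A B⁻¹

/-- Finite-field Gauss hypergeometric function
`₂F₁[A,B;C;x] = ε(x)·(BC)(-1)·∑_u B(u)(B̅C)(1-u)A̅(1-ux)`. -/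
noncomputable def ffHyp (A B C : MulChar F ℂ) (x : F) : ℂ :=
  (1 : MulChar F ℂ) x * (B * C) (-1) *
    ∑ u : F, B u * (B⁻¹ * C) (1 - u) * A⁻¹ (1 - u * x)

/-- Finite-field Appell function
`F₁(A;B,B';C;x,y) = ε(xy)·(AC)(-1)·∑_u A(u)(A̅C)(1-u)B̅(1-ux)B̅'(1-uy)`. -/
noncomputable def ffAppellF1 (A B B' C : MulChar F ℂ) (x y : F) : ℂ :=
  (1 : MulChar F ℂ) (x * y) * (A * C) (-1) *
    ∑ u : F, A u * (A⁻¹ * C) (1 - u) * B⁻¹ (1 - u * x) * B'⁻¹ (1 - u * y)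

/-- δ(0)=1, δ(t)=0 otherwise. -/
noncomputable def ffDelta (x : F) : ℂ := if x = 0 then 1 else 0

lemma mulChar_map_inv (χ : MulChar F ℂ) (a : F) : χ a⁻¹ = (χ a)⁻¹ := by
  rw [← MulChar.inv_apply', MulChar.inv_apply_eq_inv']

lemma mulChar_ne_zero (χ : MulChar F ℂ) {a : F} (ha : a ≠ 0) : χ a ≠ 0 := by
  intro h
  have : χ a * χ a⁻¹ = 1 := by
    rw [← map_mul, mul_inv_cancel₀ ha]
    exact χ.map_one
  rw [h, zero_mul] at this
  exact one_ne_zero this.symm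

lemma mulChar_neg_one_sq (χ : MulChar F ℂ) : χ (-1) * χ (-1) = 1 := by
  rw [← map_mul, neg_mul_neg, mul_one, map_one]

theorem stmt15 (A B B' C : MulChar F ℂ) (x y : F)
    (hx0 : x ≠ 0) (hx1 : x ≠ 1) (hy0 : y ≠ 0) (hy1 : y ≠ 1) :
    ffAppellF1 A B B' C x y =
      (B * B') (-1) * ffAppellF1 A B B' (A * B * B' * C⁻¹) (1 - x) (1 - y) := by
  have hx1' : (1 : F) - x ≠ 0 := sub_ne_zero.mpr (Ne.symm hx1)
  have hy1' : (1 : F) - y ≠ 0 := sub_ne_zero.mpr (Ne.symm hy1)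
  set D := A * B * B' * C⁻¹ with hD
  have hε1 : (1 : MulChar F ℂ) (x * y) = 1 :=
    MulChar.one_apply (isUnit_iff_ne_zero.mpr (mul_ne_zero hx0 hy0))
  have hε2 : (1 : MulChar F ℂ) ((1 - x) * (1 - y)) = 1 :=
    MulChar.one_apply (isUnit_iff_ne_zero.mpr (mul_ne_zero hx1' hy1'))
  set f : F → ℂ := fun u => A u * (A⁻¹ * C) (1 - u) * B⁻¹ (1 - u * x) * B'⁻¹ (1 - u * y) with hf
  set g : F → ℂ := fun u =>
    A u * (A⁻¹ * D) (1 - u) * B⁻¹ (1 - u * (1 - x)) * B'⁻¹ (1 - u * (1 - y)) with hg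
  have hf1 : f 1 = 0 := by
    simp [hf, MulChar.map_zero]
  have hg1 : g 1 = 0 := by
    simp [hg, MulChar.map_zero]
  -- key pointwise identity
  have hpt : ∀ u ∈ Finset.univ.erase (1 : F), f (u / (u - 1)) = A (-1) * g u := by
    intro u hu
    have hu1 : u ≠ 1 := (Finset.mem_erase.mp hu).1
    rcases eq_or_ne u 0 with rfl | hu0
    · simp [hf, hg, MulChar.map_zero]
    · have hu1' : (1 : F) - u ≠ 0 := sub_ne_zero.mpr (Ne.symm hu1)
      have hu1'' : u - 1 ≠ 0 := sub_ne_zero.mpr hu1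
      have e0 : u / (u - 1) = u * (-1 * (1 - u))⁻¹ := by
        field_simp
        ring
      have e1 : (1 : F) - u / (u - 1) = (1 - u)⁻¹ := by
        field_simp
        ring
      have e2 : (1 : F) - u / (u - 1) * x = (1 - u * (1 - x)) * (1 - u)⁻¹ := by
        field_simp
        ring
      have e3 : (1 : F) - u / (u - 1) * y = (1 - u * (1 - y)) * (1 - u)⁻¹ := by
        field_simp
        ring
      have hA1u := mulChar_ne_zero A hu1'
      have hB1u := mulChar_ne_zero B hu1'
      have hB'1u := mulChar_ne_zero B' hu1'
      have hC1u := mulChar_ne_zero C hu1'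
      have hAm1 : A (-1) ≠ 0 := mulChar_ne_zero A (by norm_num)
      have hAinv : (A (-1))⁻¹ = A (-1) :=
        inv_eq_of_mul_eq_one_left (mulChar_neg_one_sq A)
      simp only [hf, hg, hD]
      rw [e1, e2, e3, e0]
      simp only [MulChar.mul_apply, MulChar.inv_apply_eq_inv', map_mul, mulChar_map_inv,
        mul_inv, inv_inv]
      rw [hAinv]
      ring
  have hσmem : ∀ u ∈ Finset.univ.erase (1 : F), u / (u - 1) ∈ Finset.univ.erase (1 : F) := by
    intro u hu
    have hu1 : u ≠ 1 := (Finset.mem_erase.mp hu).1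
    have hu1'' : u - 1 ≠ 0 := sub_ne_zero.mpr hu1
    refine Finset.mem_erase.mpr ⟨?_, Finset.mem_univ _⟩
    intro h
    rw [div_eq_one_iff_eq hu1''] at h
    exact one_ne_zero (α := F) (by linear_combination h)
  have hσinv : ∀ u ∈ Finset.univ.erase (1 : F), u / (u - 1) / (u / (u - 1) - 1) = u := by
    intro u hu
    have hu1 : u ≠ 1 := (Finset.mem_erase.mp hu).1
    have hu1'' : u - 1 ≠ 0 := sub_ne_zero.mpr hu1
    have h2 : u / (u - 1) - 1 = 1 / (u - 1) := by
      field_simp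
      ring
    rw [h2]
    field_simp
  have key : ∑ u : F, f u = A (-1) * ∑ u : F, g u := by
    rw [← Finset.add_sum_erase _ f (Finset.mem_univ 1), hf1, zero_add,
      ← Finset.add_sum_erase _ g (Finset.mem_univ 1), hg1, zero_add, Finset.mul_sum]
    exact (Finset.sum_nbij' (fun u => u / (u - 1)) (fun u => u / (u - 1))
      hσmem hσmem hσinv hσinv (fun u hu => (hpt u hu).symm)).symm
  have hconst : (A * C) (-1) * A (-1) = (B * B') (-1) * (A * D) (-1) := by
    simp only [hD, MulChar.mul_apply, MulChar.inv_apply_eq_inv']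
    have hC : (C (-1))⁻¹ = C (-1) := inv_eq_of_mul_eq_one_left (mulChar_neg_one_sq C)
    rw [hC]
    have hA := mulChar_neg_one_sq A
    have hB := mulChar_neg_one_sq B
    have hB' := mulChar_neg_one_sq B'
    linear_combination (C (-1)) * hA - C (-1) * (B (-1) * B (-1)) * (B' (-1) * B' (-1)) * hA
      - C (-1) * (B' (-1) * B' (-1)) * hB - C (-1) * hB'
  show (1 : MulChar F ℂ) (x * y) * (A * C) (-1) * ∑ u : F, f u =
      (B * B') (-1) * ((1 : MulChar F ℂ) ((1 - x) * (1 - y)) * (A * D) (-1) * ∑ u : F, g u)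
  rw [hε1, hε2, key, one_mul, one_mul]
  linear_combination (∑ u : F, g u) * hconst
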